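/- Let λ be a weakly decreasing sequence of n nonnegative integers and μ a weakly decreasing sequence of n-2 nonnegative integers doubly interlacing λ. Let (x₁, z₁, ..., x_{n-1}, z_{n-1}) be the weakly decreasing rearrangement of (λ₁,...,λ_n, μ₁,...,μ_{n-2}). Then, as Laurent polynomials in t₁, t₂: Σ_{κ: μ ⊑ κ ⊑ λ} t₁^{|κ|-|μ|} t₂^{|λ|-|κ|} = (t₁t₂)^{-|μ|} · ∏_{j=1}^{n-1} (Σ_{y=z_j}^{x_j} t₁^y t₂^{x_j+z_j-y}), where |σ| denotes the sum of the entries of σ. -/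

import Mathlib

/-- `a` is a weakly decreasing sequence of length `k` (entries `a 0, …, a (k-1)`). -/
def WeaklyDecr (k : ℕ) (a : ℕ → ℤ) : Prop :=
  ∀ i : ℕ, i + 1 < k → a (i + 1) ≤ a i

/-- The entries `a 0, …, a (k-1)` are nonnegative. -/
def NonnegSeq (k : ℕ) (a : ℕ → ℤ) : Prop :=
  ∀ i : ℕ, i < k → 0 ≤ a i

/-- `Interlaces k β α` : the length-`(k-1)` sequence `β` interlaces the length-`k`
sequence `α`, i.e. `α 0 ≥ β 0 ≥ α 1 ≥ β 1 ≥ ⋯ ≥ β (k-2) ≥ α (k-1)`. -/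
def Interlaces (k : ℕ) (β α : ℕ → ℤ) : Prop :=
  ∀ i : ℕ, i + 1 < k → β i ≤ α i ∧ α (i + 1) ≤ β i

/-- `μ` (length `n-2`) doubly interlaces `lam` (length `n`):
there is a weakly decreasing `κ` of length `n-1` with `μ ⊑ κ ⊑ lam`. -/
def DoublyInterlaces (n : ℕ) (μ lam : ℕ → ℤ) : Prop :=
  ∃ κ : ℕ → ℤ, WeaklyDecr (n - 1) κ ∧ Interlaces n κ lam ∧ Interlaces (n - 1) μ κ

/-- `s` is the weakly decreasing rearrangement
`(x₁, z₁, …, x_{n-1}, z_{n-1})` (with `x j = s (2*j)`, `z j = s (2*j+1)` in 0-based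
indexing) of the concatenation of `lam` (length `n`) and `μ` (length `n-2`). -/
def Rearr (n : ℕ) (lam μ s : ℕ → ℤ) : Prop :=
  WeaklyDecr (2 * n - 2) s ∧
    ((List.range (2 * n - 2)).map s).Perm
      (((List.range n).map lam) ++ ((List.range (n - 2)).map μ))

/-- Entry access for a length-`k` tuple, with default `0` out of range. -/
def fget {k : ℕ} (a : Fin k → ℤ) (i : ℕ) : ℤ := if h : i < k then a ⟨i, h⟩ else 0

open LaurentPolynomial

/-- The monomial `t₁^a t₂^b`, in the ring of Laurent polynomials in `t₁, t₂`
(realized as iterated Laurent polynomials over `ℤ`). -/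
noncomputable def tMon (a b : ℤ) : LaurentPolynomial (LaurentPolynomial ℤ) :=
  LaurentPolynomial.C (T a) * T b

/- ### auxiliary lemmas -/

lemma sum_range_two_mul {M : Type*} [AddCommMonoid M] (f : ℕ → M) (m : ℕ) :
    ∑ i ∈ Finset.range (2 * m), f i = ∑ j ∈ Finset.range m, (f (2 * j) + f (2 * j + 1)) := by
  induction m with
  | zero => simp
  | succ p ih =>
      rw [Finset.sum_range_succ, ← ih, Nat.mul_succ, Finset.sum_range_succ, Finset.sum_range_succ]
      abel

lemma coe_map_range (f : ℕ → ℤ) (k : ℕ) :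
    (((List.range k).map f : List ℤ) : Multiset ℤ) = ∑ i ∈ Finset.range k, ({f i} : Multiset ℤ) := by
  induction k with
  | zero => simp
  | succ p ih =>
      rw [List.range_succ, List.map_append, Finset.sum_range_succ, ← ih, ← Multiset.coe_add]
      rfl

lemma list_sum_map_range (f : ℕ → ℤ) (k : ℕ) :
    ((List.range k).map f).sum = ∑ i ∈ Finset.range k, f i := by
  induction k with
  | zero => simp
  | succ p ih => rw [List.range_succ, List.map_append, Finset.sum_range_succ, ← ih]; simp

lemma singleton_min_max (a b : ℤ) :
    ({min a b} : Multiset ℤ) + {max a b} = {a} + {b} := by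
  rcases le_total a b with h | h
  · rw [min_eq_left h, max_eq_right h]
  · rw [min_eq_right h, max_eq_left h, add_comm]

lemma sorted_map_range {f : ℕ → ℤ} {k : ℕ} (h : ∀ i, i + 1 < k → f (i + 1) ≤ f i) :
    ((List.range k).map f).Pairwise (· ≥ ·) := by
  rw [← List.isChain_iff_pairwise, List.isChain_map]
  cases k with
  | zero => simp
  | succ q =>
      rw [List.isChain_range_succ]
      intro i hi
      exact h i (by omega)

lemma tMon_add (a b c d : ℤ) : tMon (a + c) (b + d) = tMon a b * tMon c d := by
  simp only [tMon, T_add, map_mul]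
  ring

lemma tMon_zero : tMon 0 0 = 1 := by simp [tMon, T_zero]

lemma tMon_prod {ι : Type*} (s : Finset ι) (f g : ι → ℤ) :
    ∏ j ∈ s, tMon (f j) (g j) = tMon (∑ j ∈ s, f j) (∑ j ∈ s, g j) := by
  induction s using Finset.cons_induction with
  | empty => simp [tMon_zero]
  | cons a s ha ih => rw [Finset.prod_cons, Finset.sum_cons, Finset.sum_cons, tMon_add, ih]

/- The upper and lower bounds of the interval for `κ j`. -/
def Xv (lam mu : ℕ → ℤ) (j : ℕ) : ℤ := if j = 0 then lam 0 else min (lam j) (mu (j - 1))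

def Zv (q : ℕ) (lam mu : ℕ → ℤ) (j : ℕ) : ℤ :=
  if j = q then lam (q + 1) else max (lam (j + 1)) (mu j)

section Bounds

variable {q : ℕ} {lam mu : ℕ → ℤ}
variable (hlam : WeaklyDecr (q + 2) lam) (hmu : WeaklyDecr q mu)
variable (hml : ∀ j < q, mu j ≤ lam j) (hlm : ∀ j < q, lam (j + 2) ≤ mu j)

include hlam hmu hml hlm in
lemma ZX_le : ∀ j < q + 1, Zv q lam mu j ≤ Xv lam mu j := by
  intro j hj
  unfold Zv Xv
  rcases eq_or_ne j 0 with rfl | h0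
  · rcases eq_or_ne 0 q with hq | hq
    · rw [if_pos hq, if_pos rfl, ← hq]
      exact hlam 0 (by omega)
    · rw [if_neg hq, if_pos rfl]
      exact max_le (hlam 0 (by omega)) (hml 0 (by omega))
  rcases eq_or_ne j q with hq | hq
  · subst hq
    rw [if_pos rfl, if_neg h0, le_min_iff]
    refine ⟨hlam j (by omega), ?_⟩
    have := hlm (j - 1) (by omega)
    rwa [show j - 1 + 2 = j + 1 by omega] at this
  · rw [if_neg hq, if_neg h0, max_le_iff, le_min_iff, le_min_iff]
    have h1 : lam (j + 1) ≤ lam j := hlam j (by omega)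
    have h2 : lam (j + 1) ≤ mu (j - 1) := by
      have := hlm (j - 1) (by omega)
      have : lam (j - 1 + 2) ≤ mu (j - 1) := this
      rwa [show j - 1 + 2 = j + 1 by omega] at this
    have h3 : mu j ≤ lam j := hml j (by omega)
    have h4 : mu j ≤ mu (j - 1) := by
      have := hmu (j - 1) (by omega)
      rwa [show j - 1 + 1 = j by omega] at this
    exact ⟨⟨h1, h2⟩, h3, h4⟩

lemma XZ_le : ∀ j : ℕ, j + 1 < q + 1 → Xv lam mu (j + 1) ≤ Zv q lam mu j := by
  intro j hj
  unfold Zv Xv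
  rw [if_neg (by omega : j + 1 ≠ 0), if_neg (by omega : j ≠ q)]
  exact le_trans (min_le_left _ _) (le_max_left _ _)

end Bounds

def tv (q : ℕ) (lam mu : ℕ → ℤ) (i : ℕ) : ℤ :=
  if i % 2 = 0 then Xv lam mu (i / 2) else Zv q lam mu (i / 2)

lemma tv_even (q : ℕ) (lam mu : ℕ → ℤ) (j : ℕ) : tv q lam mu (2 * j) = Xv lam mu j := by
  unfold tv
  rw [if_pos (by omega), Nat.mul_div_cancel_left _ (by norm_num)]

lemma tv_odd (q : ℕ) (lam mu : ℕ → ℤ) (j : ℕ) : tv q lam mu (2 * j + 1) = Zv q lam mu j := by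
  unfold tv
  rw [if_neg (by omega), show (2 * j + 1) / 2 = j by omega]

lemma tv_perm (q : ℕ) (lam mu : ℕ → ℤ) :
    ((List.range (2 * (q + 1))).map (tv q lam mu)).Perm
      (((List.range (q + 2)).map lam) ++ ((List.range q).map mu)) := by
  rw [← Multiset.coe_eq_coe]
  have hR : ((((List.range (q + 2)).map lam) ++ ((List.range q).map mu) : List ℤ) : Multiset ℤ)
      = (∑ i ∈ Finset.range (q + 2), ({lam i} : Multiset ℤ)) +
        ∑ i ∈ Finset.range q, ({mu i} : Multiset ℤ) := by
    rw [← coe_map_range, ← coe_map_range, ← Multiset.coe_add]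
  rw [hR, coe_map_range,
    sum_range_two_mul (fun i => ({tv q lam mu i} : Multiset ℤ))]
  have hL : ∑ j ∈ Finset.range (q + 1),
        (({tv q lam mu (2 * j)} : Multiset ℤ) + {tv q lam mu (2 * j + 1)})
      = ∑ j ∈ Finset.range (q + 1), (({Xv lam mu j} : Multiset ℤ) + {Zv q lam mu j}) :=
    Finset.sum_congr rfl fun j _ => by rw [tv_even, tv_odd]
  rw [hL, Finset.sum_add_distrib,
    Finset.sum_range_succ' (fun j => ({Xv lam mu j} : Multiset ℤ)) q,
    Finset.sum_range_succ (fun j => ({Zv q lam mu j} : Multiset ℤ)) q]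
  have hX0 : Xv lam mu 0 = lam 0 := if_pos rfl
  have hZq : Zv q lam mu q = lam (q + 1) := if_pos rfl
  have hXs : ∀ j ∈ Finset.range q, ({Xv lam mu (j + 1)} : Multiset ℤ)
      = {min (lam (j + 1)) (mu j)} := fun j hj => by
    unfold Xv; rw [if_neg (by omega), Nat.add_sub_cancel]
  have hZs : ∀ j ∈ Finset.range q, ({Zv q lam mu j} : Multiset ℤ)
      = {max (lam (j + 1)) (mu j)} := fun j hj => by
    unfold Zv
    rw [if_neg (by simp at hj; omega)]
  rw [Finset.sum_congr rfl hXs, Finset.sum_congr rfl hZs, hX0, hZq,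
    Finset.sum_range_succ' (fun i => ({lam i} : Multiset ℤ)) (q + 1),
    Finset.sum_range_succ (fun i => ({lam (i + 1)} : Multiset ℤ)) q]
  have hmm : (∑ j ∈ Finset.range q, ({min (lam (j + 1)) (mu j)} : Multiset ℤ)) +
      ∑ j ∈ Finset.range q, ({max (lam (j + 1)) (mu j)} : Multiset ℤ)
      = (∑ j ∈ Finset.range q, ({lam (j + 1)} : Multiset ℤ)) +
        ∑ j ∈ Finset.range q, ({mu j} : Multiset ℤ) := by
    rw [← Finset.sum_add_distrib, ← Finset.sum_add_distrib]
    exact Finset.sum_congr rfl fun j _ => singleton_min_max _ _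
  calc (∑ j ∈ Finset.range q, ({min (lam (j + 1)) (mu j)} : Multiset ℤ)) + {lam 0} +
        ((∑ j ∈ Finset.range q, ({max (lam (j + 1)) (mu j)} : Multiset ℤ)) + {lam (q + 1)})
      = ((∑ j ∈ Finset.range q, ({min (lam (j + 1)) (mu j)} : Multiset ℤ)) +
          ∑ j ∈ Finset.range q, ({max (lam (j + 1)) (mu j)} : Multiset ℤ)) +
          {lam 0} + {lam (q + 1)} := by abel
    _ = _ := by rw [hmm]; abel


open Classical in
/-- The `GL₂` character of the branching multiplicity space:
`Σ_{κ : μ ⊑ κ ⊑ λ} t₁^{|κ|-|μ|} t₂^{|λ|-|κ|}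
  = (t₁t₂)^{-|μ|} ∏_{j=1}^{n-1} Σ_{y=z_j}^{x_j} t₁^y t₂^{x_j+z_j-y}`,
as Laurent polynomials in `t₁, t₂`.  The sum on the left runs over all weakly
decreasing `κ` of length `n-1` with `μ ⊑ κ ⊑ λ` (all of which lie in the box
`Icc (fun j => λ (j+1)) (fun j => λ j)` by the interlacing condition `κ ⊑ λ`). -/
theorem stmt_10 (n : ℕ) (hn : 2 ≤ n) (lam mu s : ℕ → ℤ)
    (hlam : WeaklyDecr n lam) (hlam0 : NonnegSeq n lam)
    (hmu : WeaklyDecr (n - 2) mu) (hmu0 : NonnegSeq (n - 2) mu)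
    (hd : DoublyInterlaces n mu lam)
    (hs : Rearr n lam mu s) :
    (∑ κ ∈ Finset.filter
        (fun κ : Fin (n - 1) → ℤ =>
          WeaklyDecr (n - 1) (fget κ) ∧ Interlaces n (fget κ) lam ∧
            Interlaces (n - 1) mu (fget κ))
        (Finset.Icc (fun j : Fin (n - 1) => lam ((j : ℕ) + 1))
          (fun j : Fin (n - 1) => lam (j : ℕ))),
      tMon ((∑ j : Fin (n - 1), κ j) - ∑ i ∈ Finset.range (n - 2), mu i)
        ((∑ i ∈ Finset.range n, lam i) - ∑ j : Fin (n - 1), κ j)) =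
      tMon (-∑ i ∈ Finset.range (n - 2), mu i) (-∑ i ∈ Finset.range (n - 2), mu i) *
        ∏ j ∈ Finset.range (n - 1),
          ∑ y ∈ Finset.Icc (s (2 * j + 1)) (s (2 * j)),
            tMon y (s (2 * j) + s (2 * j + 1) - y) := by
  classical
  obtain ⟨q, rfl⟩ : ∃ q, n = q + 2 := ⟨n - 2, by omega⟩
  obtain ⟨κ₀, hk1, hk2, hk3⟩ := hd
  simp only [show q + 2 - 2 = q from rfl, show q + 2 - 1 = q + 1 from rfl] at hk1 hk3
  have hml : ∀ j < q, mu j ≤ lam j := fun j hj =>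
    le_trans (hk3 j (by omega)).1 (hk2 j (by omega)).1
  have hlm : ∀ j < q, lam (j + 2) ≤ mu j := fun j hj =>
    le_trans (hk2 (j + 1) (by omega)).2 (hk3 j (by omega)).2
  have hzx : ∀ j < q + 1, Zv q lam mu j ≤ Xv lam mu j := ZX_le hlam hmu hml hlm
  have hxz : ∀ j : ℕ, j + 1 < q + 1 → Xv lam mu (j + 1) ≤ Zv q lam mu j := XZ_le
  obtain ⟨hs1, hs2⟩ := hs
  simp only [show q + 2 - 2 = q from rfl,
    show 2 * (q + 2) - 2 = 2 * (q + 1) from by omega] at hs1 hs2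
  -- identification of s with tv
  haveI : IsAntisymm ℤ (· ≥ ·) := ⟨fun a b h1 h2 => le_antisymm h2 h1⟩
  have tvs : ∀ i, i + 1 < 2 * (q + 1) → tv q lam mu (i + 1) ≤ tv q lam mu i := by
    intro i hi
    rcases Nat.even_or_odd i with ⟨j, rfl⟩ | ⟨j, rfl⟩
    · rw [show j + j = 2 * j from by ring, tv_odd, tv_even]
      exact hzx j (by omega)
    · rw [show 2 * j + 1 + 1 = 2 * (j + 1) from by ring, tv_even, tv_odd]
      exact hxz j (by omega)
  have heq : (List.range (2 * (q + 1))).map s = (List.range (2 * (q + 1))).map (tv q lam mu) :=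
    (hs2.trans (tv_perm q lam mu).symm).eq_of_pairwise (fun a b _ _ h1 h2 => le_antisymm h2 h1)
      (sorted_map_range hs1) (sorted_map_range tvs)
  have hst : ∀ i, i < 2 * (q + 1) → s i = tv q lam mu i := by
    intro i hi
    have h1 : ((List.range (2 * (q + 1))).map s)[i]'(by simpa using hi)
        = ((List.range (2 * (q + 1))).map (tv q lam mu))[i]'(by simpa using hi) := by
      simp_rw [heq]
    simpa using h1
  have hsX : ∀ j, j < q + 1 → s (2 * j) = Xv lam mu j := fun j hj => by
    rw [hst _ (by omega), tv_even]
  have hsZ : ∀ j, j < q + 1 → s (2 * j + 1) = Zv q lam mu j := fun j hj => by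
    rw [hst _ (by omega), tv_odd]
  -- sum identity
  have hsum : (∑ i ∈ Finset.range (q + 2), lam i) + ∑ i ∈ Finset.range q, mu i
      = ∑ j ∈ Finset.range (q + 1), (Xv lam mu j + Zv q lam mu j) := by
    have hp := hs2.sum_eq
    rw [List.sum_append, list_sum_map_range, list_sum_map_range, list_sum_map_range,
      sum_range_two_mul] at hp
    rw [← hp]
    exact Finset.sum_congr rfl fun j hj => by
      rw [hsX j (Finset.mem_range.mp hj), hsZ j (Finset.mem_range.mp hj)]
  -- the filtered set is a box
  have hset :
      (Finset.filter
        (fun κ : Fin (q + 2 - 1) → ℤ =>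
          WeaklyDecr (q + 2 - 1) (fget κ) ∧ Interlaces (q + 2) (fget κ) lam ∧
            Interlaces (q + 2 - 1) mu (fget κ))
        (Finset.Icc (fun j : Fin (q + 2 - 1) => lam ((j : ℕ) + 1))
          (fun j : Fin (q + 2 - 1) => lam (j : ℕ))))
      = Finset.Icc (fun j : Fin (q + 2 - 1) => Zv q lam mu (j : ℕ))
          (fun j : Fin (q + 2 - 1) => Xv lam mu (j : ℕ)) := by
    have XvK : ∀ i, i < q + 1 → Xv lam mu i ≤ lam i := by
      intro i hi
      unfold Xv
      split_ifs with h
      · rw [h]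
      · exact min_le_left _ _
    have ZvK : ∀ i, i < q + 1 → lam (i + 1) ≤ Zv q lam mu i := by
      intro i hi
      unfold Zv
      split_ifs with h
      · rw [h]
      · exact le_max_left _ _
    have ZvMu : ∀ i, i + 1 < q + 1 → mu i ≤ Zv q lam mu i := by
      intro i hi
      unfold Zv
      rw [if_neg (by omega)]
      exact le_max_right _ _
    have XvMu : ∀ i, i + 1 < q + 1 → Xv lam mu (i + 1) ≤ mu i := by
      intro i hi
      unfold Xv
      rw [if_neg (by omega), Nat.add_sub_cancel]
      exact min_le_right _ _
    ext κ
    simp only [Finset.mem_filter, Finset.mem_Icc, Pi.le_def]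
    have fg : ∀ (i : ℕ) (h : i < q + 1), fget κ i = κ ⟨i, h⟩ := fun i h => dif_pos h
    constructor
    · rintro ⟨⟨hlo, hhi⟩, h1, h2, h3⟩
      constructor
      · intro j
        have hjlt := j.isLt
        unfold Zv
        rcases eq_or_ne (j : ℕ) q with hq | hq
        · rw [if_pos hq]
          have := hlo j
          rwa [hq] at this
        · rw [if_neg hq, max_le_iff]
          refine ⟨hlo j, ?_⟩
          have h := (h3 (j : ℕ) (by omega)).1
          rwa [fg (j : ℕ) j.isLt] at h
      · intro j
        have hjlt := j.isLt
        unfold Xv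
        rcases eq_or_ne (j : ℕ) 0 with hq | hq
        · rw [if_pos hq]
          have := hhi j
          rwa [hq] at this
        · rw [if_neg hq, le_min_iff]
          refine ⟨hhi j, ?_⟩
          have h := (h3 ((j : ℕ) - 1) (by omega)).2
          rwa [show (j : ℕ) - 1 + 1 = (j : ℕ) from by omega, fg (j : ℕ) j.isLt] at h
    · rintro ⟨hZ, hX⟩
      have hZ' : ∀ i (h : i < q + 1), Zv q lam mu i ≤ κ ⟨i, h⟩ := fun i h => hZ ⟨i, h⟩
      have hX' : ∀ i (h : i < q + 1), κ ⟨i, h⟩ ≤ Xv lam mu i := fun i h => hX ⟨i, h⟩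
      refine ⟨⟨fun j => ?_, fun j => ?_⟩, ?_, ?_, ?_⟩
      · exact le_trans (ZvK _ j.isLt) (hZ j)
      · exact le_trans (hX j) (XvK _ j.isLt)
      · intro i hi
        rw [fg (i + 1) (by omega), fg i (by omega)]
        exact le_trans (hX' (i + 1) (by omega))
          (le_trans (hxz i hi) (hZ' i (by omega)))
      · intro i hi
        have hi' : i < q + 1 := by omega
        rw [fg i hi']
        exact ⟨le_trans (hX' i hi') (XvK i hi'), le_trans (ZvK i hi') (hZ' i hi')⟩
      · intro i hi
        rw [fg i (by omega), fg (i + 1) (by omega)]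
        exact ⟨le_trans (ZvMu i hi) (hZ' i (by omega)),
          le_trans (hX' (i + 1) (by omega)) (XvMu i hi)⟩
  rw [hset, Pi.Icc_eq]
  have step : ∀ κ ∈ Fintype.piFinset
      (fun j : Fin (q + 2 - 1) => Finset.Icc (Zv q lam mu (j : ℕ)) (Xv lam mu (j : ℕ))),
      tMon ((∑ j : Fin (q + 2 - 1), κ j) - ∑ i ∈ Finset.range (q + 2 - 2), mu i)
        ((∑ i ∈ Finset.range (q + 2), lam i) - ∑ j : Fin (q + 2 - 1), κ j)
      = tMon (-∑ i ∈ Finset.range (q + 2 - 2), mu i) (-∑ i ∈ Finset.range (q + 2 - 2), mu i) *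
          ∏ j : Fin (q + 2 - 1), tMon (κ j) (Xv lam mu (j : ℕ) + Zv q lam mu (j : ℕ) - κ j) := by
    intro κ _
    rw [tMon_prod, ← tMon_add]
    congr 1
    · ring
    · have hXZsum : ∑ j : Fin (q + 2 - 1), (Xv lam mu (j : ℕ) + Zv q lam mu (j : ℕ))
          = (∑ i ∈ Finset.range (q + 2), lam i) + ∑ i ∈ Finset.range (q + 2 - 2), mu i := by
        rw [Fin.sum_univ_eq_sum_range (fun j => Xv lam mu j + Zv q lam mu j) (q + 2 - 1)]
        exact hsum.symm
      rw [Finset.sum_sub_distrib, hXZsum]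
      ring
  rw [Finset.sum_congr rfl step, ← Finset.mul_sum]
  congr 1
  refine Eq.trans (Finset.prod_univ_sum
    (fun j : Fin (q + 2 - 1) => Finset.Icc (Zv q lam mu (j : ℕ)) (Xv lam mu (j : ℕ)))
    (fun j y => tMon y (Xv lam mu (j : ℕ) + Zv q lam mu (j : ℕ) - y))).symm ?_
  rw [Fin.prod_univ_eq_prod_range
    (fun j => ∑ y ∈ Finset.Icc (Zv q lam mu j) (Xv lam mu j),
      tMon y (Xv lam mu j + Zv q lam mu j - y)) (q + 2 - 1)]
  exact Finset.prod_congr rfl fun j hj => by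
    have hj' : j < q + 1 := Finset.mem_range.mp hj
    rw [hsX j hj', hsZ j hj']
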